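/- Let α ≤ α′ < β′ ≤ β be real numbers and let η ≥ 0 be an integer. Suppose a polynomial φ has Bernstein coefficients c_0,…,c_η relative to [α,β] and Bernstein coefficients c′_0,…,c′_η relative to the subinterval [α′,β′]; that is, φ(x) = Σ_{ℓ=0}^{η} c_ℓ · b_ℓ^{η,[α,β]}(x) = Σ_{ℓ=0}^{η} c′_ℓ · b_ℓ^{η,[α′,β′]}(x) for all x ∈ ℝ. Then min_{0≤ℓ≤η} c_ℓ ≤ c′_j ≤ max_{0≤ℓ≤η} c_ℓ for every j; in particular the Bernstein coefficient range bound becomes monotonically tighter under subdivision: [min c′, max c′] ⊆ [min c, max c]. -/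

import Mathlib

/-- One-dimensional Bernstein basis function of degree `η`, index `ℓ`, on `[α, β]`. -/
noncomputable def bern (η ℓ : ℕ) (α β x : ℝ) : ℝ :=
  (η.choose ℓ : ℝ) / (β - α) ^ η * (β - x) ^ (η - ℓ) * (x - α) ^ ℓ

open Polynomial Finset

namespace BernSub

lemma elev1 (n j : ℕ) :
    (1 - X) * bernsteinPolynomial ℝ n j
      = C (((n + 1 - j : ℕ) : ℝ) / ((n : ℝ) + 1)) * bernsteinPolynomial ℝ (n + 1) j := by
  have hc : ((n.choose j : ℝ)) * ((n : ℝ) + 1)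
      = (((n + 1).choose j : ℝ)) * (((n + 1 - j : ℕ) : ℝ)) := by
    exact_mod_cast Nat.choose_mul_succ_eq n j
  rcases le_or_gt j n with h | h
  · have hexp : n + 1 - j = (n - j) + 1 := by omega
    rw [bernsteinPolynomial, bernsteinPolynomial, hexp, pow_succ]
    rw [← Polynomial.C_eq_natCast, ← Polynomial.C_eq_natCast]
    have key : C ((((n - j + 1 : ℕ) : ℝ) / ((n : ℝ) + 1))) * C (((n + 1).choose j : ℝ))
        = C ((n.choose j : ℝ)) := by
      rw [← C_mul]
      congr 1
      field_simp
      rw [show ((n + 1 - j : ℕ):ℝ) = (n:ℝ) - (j:ℝ) + 1 from by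
        push_cast [Nat.cast_sub (show j ≤ n + 1 by omega)]; ring] at hc
      push_cast [Nat.cast_sub h]
      linarith [hc]
    linear_combination (-(X ^ j * (1 - X) ^ (n - j) * (1 - X))) * key
  · rcases Nat.lt_or_ge j (n + 2) with h2 | h2
    · have hj : j = n + 1 := by omega
      subst hj
      simp [bernsteinPolynomial, Nat.choose_eq_zero_of_lt h]
    · rw [bernsteinPolynomial.eq_zero_of_lt ℝ h, bernsteinPolynomial.eq_zero_of_lt ℝ (by omega)]
      simp

lemma elev2 (n j : ℕ) :
    X * bernsteinPolynomial ℝ n j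
      = C (((j : ℝ) + 1) / ((n : ℝ) + 1)) * bernsteinPolynomial ℝ (n + 1) (j + 1) := by
  have hc : ((n : ℝ) + 1) * ((n.choose j : ℝ))
      = (((n + 1).choose (j + 1) : ℝ)) * ((j : ℝ) + 1) := by
    exact_mod_cast Nat.add_one_mul_choose_eq n j
  rcases le_or_gt j n with h | h
  · have hexp : n + 1 - (j + 1) = n - j := by omega
    rw [bernsteinPolynomial, bernsteinPolynomial, hexp, pow_succ]
    rw [← Polynomial.C_eq_natCast, ← Polynomial.C_eq_natCast]
    have key : C (((j : ℝ) + 1) / ((n : ℝ) + 1)) * C (((n + 1).choose (j + 1) : ℝ))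
        = C ((n.choose j : ℝ)) := by
      rw [← C_mul]
      congr 1
      field_simp
      linarith [hc]
    linear_combination (-(X ^ j * X * (1 - X) ^ (n - j))) * key
  · rw [bernsteinPolynomial.eq_zero_of_lt ℝ h, bernsteinPolynomial.eq_zero_of_lt ℝ (by omega)]
    simp

lemma bp_rec0 (n : ℕ) :
    bernsteinPolynomial ℝ (n + 1) 0 = (1 - X) * bernsteinPolynomial ℝ n 0 := by
  simp [bernsteinPolynomial, pow_succ]
  ring

lemma bp_rec (n k : ℕ) :
    bernsteinPolynomial ℝ (n + 1) (k + 1)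
      = (1 - X) * bernsteinPolynomial ℝ n (k + 1) + X * bernsteinPolynomial ℝ n k := by
  rcases lt_trichotomy k n with h | h | h
  · have h1 : n + 1 - (k + 1) = (n - (k + 1)) + 1 := by omega
    have h2 : (n + 1).choose (k + 1) = n.choose k + n.choose (k + 1) := by
      rw [Nat.choose_succ_succ]
    rw [bernsteinPolynomial, bernsteinPolynomial, bernsteinPolynomial, h1, h2]
    push_cast
    have h3 : n - k = (n - (k + 1)) + 1 := by omega
    rw [h3]
    ring
  · subst h
    rw [bernsteinPolynomial.eq_zero_of_lt ℝ (Nat.lt_succ_self k)]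
    simp [bernsteinPolynomial, Nat.choose_self, pow_succ]
    ring
  · rw [bernsteinPolynomial.eq_zero_of_lt ℝ (by omega),
      bernsteinPolynomial.eq_zero_of_lt ℝ (by omega),
      bernsteinPolynomial.eq_zero_of_lt ℝ (by omega)]
    simp


/-- `p` is a nonnegative combination of the degree-`n` Bernstein polynomials. -/
def InCone (n : ℕ) (p : ℝ[X]) : Prop :=
  ∃ A : ℕ → ℝ, (∀ j, 0 ≤ A j) ∧ (∀ j, n < j → A j = 0) ∧
    p = ∑ j ∈ range (n + 1), C (A j) * bernsteinPolynomial ℝ n j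

lemma InCone.add {n : ℕ} {p q : ℝ[X]} (hp : InCone n p) (hq : InCone n q) :
    InCone n (p + q) := by
  obtain ⟨A, hA0, hAz, rfl⟩ := hp
  obtain ⟨B, hB0, hBz, rfl⟩ := hq
  refine ⟨fun j => A j + B j, fun j => add_nonneg (hA0 j) (hB0 j),
    fun j hj => by dsimp only; rw [hAz j hj, hBz j hj, add_zero], ?_⟩
  rw [← Finset.sum_add_distrib]
  refine Finset.sum_congr rfl fun j _ => ?_
  rw [map_add, add_mul]

lemma InCone.affine_mul {n : ℕ} {p : ℝ[X]} (a b : ℝ) (ha : 0 ≤ a) (hb : 0 ≤ b)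
    (hp : InCone n p) : InCone (n + 1) ((C a * (1 - X) + C b * X) * p) := by
  obtain ⟨A, hA0, hAz, rfl⟩ := hp
  refine ⟨fun j => a * A j * (((n : ℝ) + 1) - j) / ((n : ℝ) + 1)
      + b * A (j - 1) * j / ((n : ℝ) + 1), ?_, ?_, ?_⟩
  · intro j
    dsimp only
    rcases le_or_gt j (n + 1) with h | h
    · have h1 : (0:ℝ) ≤ ((n : ℝ) + 1) - j := by
        have : (j : ℝ) ≤ (n : ℝ) + 1 := by exact_mod_cast h
        linarith
      have hpos : (0:ℝ) < (n : ℝ) + 1 := by positivity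
      have := hA0 j
      have := hA0 (j - 1)
      positivity
    · rw [hAz j (by omega), hAz (j - 1) (by omega)]
      simp
  · intro j hj
    dsimp only
    rw [hAz j (by omega), hAz (j - 1) (by omega)]
    simp
  · have hsplit : ∀ j ∈ range (n + 2),
        C (a * A j * (((n : ℝ) + 1) - j) / ((n : ℝ) + 1)
            + b * A (j - 1) * j / ((n : ℝ) + 1)) * bernsteinPolynomial ℝ (n + 1) j
          = C (a * A j * (((n : ℝ) + 1) - j) / ((n : ℝ) + 1)) * bernsteinPolynomial ℝ (n + 1) j
            + C (b * A (j - 1) * j / ((n : ℝ) + 1)) * bernsteinPolynomial ℝ (n + 1) j := by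
      intro j _
      rw [map_add, add_mul]
    rw [Finset.sum_congr rfl hsplit, Finset.sum_add_distrib]
    have hfirst : ∑ j ∈ range (n + 2),
        C (a * A j * (((n : ℝ) + 1) - j) / ((n : ℝ) + 1)) * bernsteinPolynomial ℝ (n + 1) j
          = ∑ j ∈ range (n + 1), C (a * A j) * ((1 - X) * bernsteinPolynomial ℝ n j) := by
      rw [Finset.sum_range_succ]
      have hlast : C (a * A (n + 1) * (((n : ℝ) + 1) - (n + 1 : ℕ)) / ((n : ℝ) + 1))
          * bernsteinPolynomial ℝ (n + 1) (n + 1) = 0 := by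
        have : (((n : ℝ) + 1) - ((n + 1 : ℕ) : ℝ)) = 0 := by push_cast; ring
        rw [this]
        simp
      rw [hlast, add_zero]
      refine Finset.sum_congr rfl fun j hj => ?_
      rw [Finset.mem_range] at hj
      rw [elev1 n j, ← mul_assoc, ← C_mul]
      congr 2
      have hcast : ((n + 1 - j : ℕ) : ℝ) = ((n : ℝ) + 1) - j := by
        push_cast [Nat.cast_sub (show j ≤ n + 1 by omega)]; ring
      rw [hcast]
      ring
    have hsecond : ∑ j ∈ range (n + 2),
        C (b * A (j - 1) * j / ((n : ℝ) + 1)) * bernsteinPolynomial ℝ (n + 1) j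
          = ∑ j ∈ range (n + 1), C (b * A j) * (X * bernsteinPolynomial ℝ n j) := by
      rw [Finset.sum_range_succ']
      have h0 : C (b * A (0 - 1) * (0 : ℕ) / ((n : ℝ) + 1)) * bernsteinPolynomial ℝ (n + 1) 0
          = 0 := by
        simp
      rw [h0, add_zero]
      refine Finset.sum_congr rfl fun j hj => ?_
      rw [elev2 n j, ← mul_assoc, ← C_mul]
      congr 2
      push_cast [Nat.add_sub_cancel]
      ring
    rw [hfirst, hsecond, Finset.mul_sum, ← Finset.sum_add_distrib]
    refine Finset.sum_congr rfl fun j _ => ?_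
    rw [map_mul, map_mul]
    ring

lemma cone_comp {s t : ℝ} (hs : 0 ≤ s) (hst : s ≤ t) (ht : t ≤ 1) (n : ℕ) :
    ∀ ℓ : ℕ, InCone n ((bernsteinPolynomial ℝ n ℓ).comp (C s + C (t - s) * X)) := by
  induction n with
  | zero =>
    intro ℓ
    match ℓ with
    | 0 =>
      refine ⟨fun j => if j = 0 then 1 else 0, ?_, ?_, ?_⟩
      · intro j; dsimp only; split <;> norm_num
      · intro j hj; dsimp only; rw [if_neg (by omega)]
      · simp [bernsteinPolynomial]
    | (k + 1) =>
      rw [bernsteinPolynomial.eq_zero_of_lt ℝ (Nat.succ_pos k), zero_comp]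
      exact ⟨fun _ => 0, fun _ => le_refl 0, fun _ _ => rfl, by simp⟩
  | succ n ih =>
    have hu1 : (1 : ℝ[X]) - (C s + C (t - s) * X) = C (1 - s) * (1 - X) + C (1 - t) * X := by
      simp only [map_sub, C_1]
      ring
    have hu2 : (C s + C (t - s) * X : ℝ[X]) = C s * (1 - X) + C t * X := by
      simp only [map_sub]
      ring
    intro ℓ
    match ℓ with
    | 0 =>
      rw [bp_rec0, mul_comp, sub_comp, one_comp, X_comp, hu1]
      exact InCone.affine_mul (1 - s) (1 - t) (by linarith) (by linarith) (ih 0)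
    | (k + 1) =>
      rw [bp_rec, add_comp, mul_comp, mul_comp, sub_comp, one_comp, X_comp, hu1]
      refine InCone.add
        (InCone.affine_mul (1 - s) (1 - t) (by linarith) (by linarith) (ih (k + 1))) ?_
      have h2 := InCone.affine_mul s t hs (by linarith) (ih k)
      rwa [← hu2] at h2


lemma coeff_unique {n : ℕ} (d : ℕ → ℝ)
    (h : ∑ j ∈ range (n + 1), C (d j) * bernsteinPolynomial ℝ n j = 0) :
    ∀ j, j ≤ n → d j = 0 := by
  suffices H : ∀ m : ℕ, ∀ j, j ≤ n → n - j < m → d j = 0 by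
    intro j hj
    exact H (n - j + 1) j hj (by omega)
  intro m
  induction m with
  | zero => intro j _ hj; omega
  | succ m ih =>
    intro j hj hjm
    rcases lt_or_ge (n - j) m with hc | hc
    · exact ih j hj hc
    have hm : m = n - j := by omega
    subst hm
    have happ := congrArg (fun p : ℝ[X] => (Polynomial.derivative^[n - j] p).eval 1) h
    simp only [Polynomial.iterate_derivative_sum, Polynomial.iterate_derivative_C_mul,
      Polynomial.eval_finset_sum, Polynomial.eval_mul, Polynomial.eval_C,
      Function.iterate_fixed, Polynomial.iterate_derivative_zero, Polynomial.eval_zero] at happ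
    rw [Finset.sum_eq_single j] at happ
    · have hne := bernsteinPolynomial.iterate_derivative_at_1_ne_zero ℝ n j hj
      exact (mul_eq_zero.mp happ).resolve_right hne
    · intro i hi hij
      rw [Finset.mem_range] at hi
      rcases lt_or_gt_of_ne hij with hlt | hgt
      · -- i < j : derivative order n - j < n - i kills it
        rw [bernsteinPolynomial.iterate_derivative_at_1_eq_zero_of_lt ℝ n (by omega), mul_zero]
      · -- i > j : coefficient is zero by ih
        rw [ih i (by omega) (by omega), zero_mul]
    · intro hjmem
      exact absurd (Finset.mem_range.mpr (by omega)) hjmem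


lemma bern_eval (η ℓ : ℕ) (hℓ : ℓ ≤ η) {a b : ℝ} (hab : a < b) (x : ℝ) :
    bern η ℓ a b x = (bernsteinPolynomial ℝ η ℓ).eval ((x - a) / (b - a)) := by
  have hba : b - a ≠ 0 := sub_ne_zero.mpr hab.ne'
  have h1 : (1 : ℝ) - (x - a) / (b - a) = (b - x) / (b - a) := by
    field_simp
    ring
  rw [bernsteinPolynomial]
  simp only [Polynomial.eval_mul, Polynomial.eval_pow, Polynomial.eval_natCast,
    Polynomial.eval_sub, Polynomial.eval_one, Polynomial.eval_X]
  rw [h1, div_pow, div_pow, bern]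
  rw [show (b - a) ^ η = (b - a) ^ (η - ℓ) * (b - a) ^ ℓ by
    rw [← pow_add]; congr 1; omega]
  field_simp

lemma bern_sum (η : ℕ) {a b : ℝ} (hab : a < b) (x : ℝ) :
    ∑ ℓ : Fin (η + 1), bern η ℓ.val a b x = 1 := by
  have : ∀ ℓ : Fin (η + 1),
      bern η ℓ.val a b x = (bernsteinPolynomial ℝ η ℓ.val).eval ((x - a) / (b - a)) :=
    fun ℓ => bern_eval η ℓ.val (Nat.lt_succ_iff.mp ℓ.isLt) hab x
  rw [Finset.sum_congr rfl fun ℓ _ => this ℓ]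
  rw [← Polynomial.eval_finset_sum]
  rw [show ∑ ℓ : Fin (η + 1), bernsteinPolynomial ℝ η ℓ.val
      = ∑ ℓ ∈ range (η + 1), bernsteinPolynomial ℝ η ℓ from
    (Finset.sum_range fun ℓ => bernsteinPolynomial ℝ η ℓ).symm]
  rw [bernsteinPolynomial.sum]
  simp


lemma bp_sum_eval (η : ℕ) (y : ℝ) :
    ∑ ℓ : Fin (η + 1), (bernsteinPolynomial ℝ η ℓ.val).eval y = 1 := by
  rw [← Polynomial.eval_finset_sum]
  rw [show ∑ ℓ : Fin (η + 1), bernsteinPolynomial ℝ η ℓ.val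
      = ∑ ℓ ∈ range (η + 1), bernsteinPolynomial ℝ η ℓ from
    (Finset.sum_range fun ℓ => bernsteinPolynomial ℝ η ℓ).symm]
  rw [bernsteinPolynomial.sum]
  simp

lemma key {η : ℕ} {s t : ℝ}
    (A : Fin (η + 1) → ℕ → ℝ)
    (hAeq : ∀ ℓ : Fin (η + 1), (bernsteinPolynomial ℝ η ℓ.val).comp (C s + C (t - s) * X)
        = ∑ j ∈ range (η + 1), C (A ℓ j) * bernsteinPolynomial ℝ η j)
    (cc cc' : Fin (η + 1) → ℝ)
    (hP : ∀ v : ℝ,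
        ∑ ℓ : Fin (η + 1), cc ℓ * (bernsteinPolynomial ℝ η ℓ.val).eval (s + (t - s) * v)
          = ∑ ℓ : Fin (η + 1), cc' ℓ * (bernsteinPolynomial ℝ η ℓ.val).eval v) :
    ∀ j : Fin (η + 1), ∑ ℓ : Fin (η + 1), cc ℓ * A ℓ j.val = cc' j := by
  set u : ℝ[X] := C s + C (t - s) * X with hu
  have hP_poly : ∑ ℓ : Fin (η + 1), C (cc ℓ) * (bernsteinPolynomial ℝ η ℓ.val).comp u
      = ∑ ℓ : Fin (η + 1), C (cc' ℓ) * bernsteinPolynomial ℝ η ℓ.val := by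
    apply Polynomial.funext
    intro v
    simp only [Polynomial.eval_finset_sum, Polynomial.eval_mul, Polynomial.eval_C,
      Polynomial.eval_comp, hu, Polynomial.eval_add, Polynomial.eval_X]
    exact hP v
  have hswap : ∑ ℓ : Fin (η + 1), C (cc ℓ) * (bernsteinPolynomial ℝ η ℓ.val).comp u
      = ∑ i ∈ range (η + 1),
          C (∑ ℓ : Fin (η + 1), cc ℓ * A ℓ i) * bernsteinPolynomial ℝ η i := by
    calc ∑ ℓ : Fin (η + 1), C (cc ℓ) * (bernsteinPolynomial ℝ η ℓ.val).comp u
        = ∑ ℓ : Fin (η + 1), ∑ i ∈ range (η + 1),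
            C (cc ℓ * A ℓ i) * bernsteinPolynomial ℝ η i := by
          refine Finset.sum_congr rfl fun ℓ _ => ?_
          rw [hAeq ℓ, Finset.mul_sum]
          exact Finset.sum_congr rfl fun i _ => by rw [← mul_assoc, ← C_mul]
      _ = ∑ i ∈ range (η + 1), ∑ ℓ : Fin (η + 1),
            C (cc ℓ * A ℓ i) * bernsteinPolynomial ℝ η i := Finset.sum_comm
      _ = ∑ i ∈ range (η + 1),
            C (∑ ℓ : Fin (η + 1), cc ℓ * A ℓ i) * bernsteinPolynomial ℝ η i := by
          refine Finset.sum_congr rfl fun i _ => ?_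
          rw [map_sum, Finset.sum_mul]
  set D' : ℕ → ℝ := fun i => if h : i < η + 1 then cc' ⟨i, h⟩ else 0 with hD'
  have hsnd : ∑ ℓ : Fin (η + 1), C (cc' ℓ) * bernsteinPolynomial ℝ η ℓ.val
      = ∑ i ∈ range (η + 1), C (D' i) * bernsteinPolynomial ℝ η i := by
    rw [Finset.sum_range fun i => C (D' i) * bernsteinPolynomial ℝ η i]
    refine Finset.sum_congr rfl fun ℓ _ => ?_
    congr 1
    simp [hD']
    intro h; exact absurd h (by omega)
  have hzero : ∑ i ∈ range (η + 1),
      C ((∑ ℓ : Fin (η + 1), cc ℓ * A ℓ i) - D' i) * bernsteinPolynomial ℝ η i = 0 := by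
    have : ∀ i ∈ range (η + 1),
        C ((∑ ℓ : Fin (η + 1), cc ℓ * A ℓ i) - D' i) * bernsteinPolynomial ℝ η i
          = C (∑ ℓ : Fin (η + 1), cc ℓ * A ℓ i) * bernsteinPolynomial ℝ η i
            - C (D' i) * bernsteinPolynomial ℝ η i := by
      intro i _
      rw [map_sub, sub_mul]
    rw [Finset.sum_congr rfl this, Finset.sum_sub_distrib, ← hswap, ← hsnd, hP_poly, sub_self]
  have := coeff_unique _ hzero
  intro j
  have hj := this j.val (Nat.lt_succ_iff.mp j.isLt)
  have hD'j : D' j.val = cc' j := by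
    simp [hD']
    intro h; exact absurd h (by omega)
  rw [hD'j] at hj
  linarith [hj]

end BernSub

open Polynomial Finset BernSub

/-- Bernstein coefficients relative to a subinterval lie within the range of the Bernstein
coefficients relative to the original interval: the Bernstein range bound becomes
monotonically tighter under subdivision. -/
theorem bernstein_subdivision_bound (α β α' β' : ℝ)
    (h1 : α ≤ α') (h2 : α' < β') (h3 : β' ≤ β)
    (η : ℕ) (c c' : Fin (η + 1) → ℝ)
    (hrep : ∀ x : ℝ, ∑ ℓ : Fin (η + 1), c ℓ * bern η ℓ.val α β x
                   = ∑ ℓ : Fin (η + 1), c' ℓ * bern η ℓ.val α' β' x) :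
    ∀ j : Fin (η + 1),
      Finset.univ.inf' Finset.univ_nonempty c ≤ c' j ∧
        c' j ≤ Finset.univ.sup' Finset.univ_nonempty c := by
  have hαβ : α < β := lt_of_le_of_lt h1 (lt_of_lt_of_le h2 h3)
  have hβα : (0:ℝ) < β - α := sub_pos.mpr hαβ
  have hβ'α' : (0:ℝ) < β' - α' := sub_pos.mpr h2
  set s := (α' - α) / (β - α) with hs_def
  set t := (β' - α) / (β - α) with ht_def
  have hs : 0 ≤ s := div_nonneg (by linarith) hβα.le
  have hst : s ≤ t := by
    rw [hs_def, ht_def]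
    exact (div_le_div_iff_of_pos_right hβα).mpr (by linarith)
  have ht : t ≤ 1 := by rw [ht_def, div_le_one hβα]; linarith
  have hts : t - s = (β' - α') / (β - α) := by
    rw [hs_def, ht_def, div_sub_div_same]
    ring_nf
  choose A hA0 hAz hAeq using fun ℓ : Fin (η + 1) => cone_comp hs hst ht η ℓ.val
  have hPc : ∀ v : ℝ,
      ∑ ℓ : Fin (η + 1), c ℓ * (bernsteinPolynomial ℝ η ℓ.val).eval (s + (t - s) * v)
        = ∑ ℓ : Fin (η + 1), c' ℓ * (bernsteinPolynomial ℝ η ℓ.val).eval v := by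
    intro v
    have e1 : (α' + (β' - α') * v - α') / (β' - α') = v := by
      field_simp
      ring
    have e2 : (α' + (β' - α') * v - α) / (β - α) = s + (t - s) * v := by
      rw [hts, hs_def]
      field_simp
      ring
    have L : ∀ ℓ : Fin (η + 1),
        bern η ℓ.val α β (α' + (β' - α') * v)
          = (bernsteinPolynomial ℝ η ℓ.val).eval (s + (t - s) * v) := by
      intro ℓ
      rw [bern_eval η ℓ.val (Nat.lt_succ_iff.mp ℓ.isLt) hαβ, e2]
    have R : ∀ ℓ : Fin (η + 1),
        bern η ℓ.val α' β' (α' + (β' - α') * v)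
          = (bernsteinPolynomial ℝ η ℓ.val).eval v := by
      intro ℓ
      rw [bern_eval η ℓ.val (Nat.lt_succ_iff.mp ℓ.isLt) h2, e1]
    calc ∑ ℓ : Fin (η + 1), c ℓ * (bernsteinPolynomial ℝ η ℓ.val).eval (s + (t - s) * v)
        = ∑ ℓ : Fin (η + 1), c ℓ * bern η ℓ.val α β (α' + (β' - α') * v) := by
          exact Finset.sum_congr rfl fun ℓ _ => by rw [L ℓ]
      _ = ∑ ℓ : Fin (η + 1), c' ℓ * bern η ℓ.val α' β' (α' + (β' - α') * v) :=
          hrep (α' + (β' - α') * v)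
      _ = ∑ ℓ : Fin (η + 1), c' ℓ * (bernsteinPolynomial ℝ η ℓ.val).eval v :=
          Finset.sum_congr rfl fun ℓ _ => by rw [R ℓ]
  have hkey := key A hAeq c c' hPc
  have hPone : ∀ v : ℝ,
      ∑ ℓ : Fin (η + 1), (1:ℝ) * (bernsteinPolynomial ℝ η ℓ.val).eval (s + (t - s) * v)
        = ∑ ℓ : Fin (η + 1), (1:ℝ) * (bernsteinPolynomial ℝ η ℓ.val).eval v := by
    intro v
    simp only [one_mul, bp_sum_eval]
  have hone := key A hAeq (fun _ => 1) (fun _ => 1) hPone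
  intro j
  have hw1 : ∑ ℓ : Fin (η + 1), A ℓ j.val = 1 := by simpa using hone j
  have hval : ∑ ℓ : Fin (η + 1), c ℓ * A ℓ j.val = c' j := hkey j
  constructor
  · have hlo : ∑ ℓ : Fin (η + 1), (Finset.univ.inf' Finset.univ_nonempty c) * A ℓ j.val
        ≤ ∑ ℓ : Fin (η + 1), c ℓ * A ℓ j.val :=
      Finset.sum_le_sum fun ℓ _ => mul_le_mul_of_nonneg_right
        (Finset.inf'_le c (Finset.mem_univ ℓ)) (hA0 ℓ j.val)
    rw [← Finset.mul_sum, hw1, mul_one, hval] at hlo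
    exact hlo
  · have hhi : ∑ ℓ : Fin (η + 1), c ℓ * A ℓ j.val
        ≤ ∑ ℓ : Fin (η + 1), (Finset.univ.sup' Finset.univ_nonempty c) * A ℓ j.val :=
      Finset.sum_le_sum fun ℓ _ => mul_le_mul_of_nonneg_right
        (Finset.le_sup' c (Finset.mem_univ ℓ)) (hA0 ℓ j.val)
    rw [← Finset.mul_sum, hw1, mul_one, hval] at hhi
    exact hhi
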